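/- arXiv:1804.09701 — 9 statements merged into one kernel-verified Lean document; each statement's English description precedes it below -/
import Mathlib

section
/- Let u, v be nonzero vectors of an n-dimensional vector space V over F_2 with |S_u| = r ≠ s = |S_v|. Then no automorphism g of the non-zero component graph G(V) satisfies g(u) = v. -/
open Finset

/-- Vertices of the non-zero component graph: nonzero vectors of `V = (Fin n → ZMod 2)`. -/
abbrev Vtx (n : ℕ) := {v : Fin n → ZMod 2 // v ≠ 0}

/-- The support (skeleton) of a vector: basis vectors with nonzero coefficient. -/
def supp {n : ℕ} (v : Fin n → ZMod 2) : Finset (Fin n) :=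
  Finset.univ.filter (fun i => v i ≠ 0)

/-- The non-zero component graph of an `n`-dimensional vector space over `F_2`:
two distinct nonzero vectors are adjacent iff their supports intersect. -/
def NZC (n : ℕ) : SimpleGraph (Vtx n) where
  Adj u v := u ≠ v ∧ ∃ i, u.1 i ≠ 0 ∧ v.1 i ≠ 0
  symm := by
    constructor
    rintro u v ⟨h1, i, h2, h3⟩
    exact ⟨h1.symm, i, h3, h2⟩
  loopless := by
    constructor
    rintro u ⟨h, -⟩
    exact h rfl

instance (n : ℕ) : DecidableRel (NZC n).Adj := fun u v => by
  unfold NZC; infer_instance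

/-- Functions vanishing on `S` are equivalent to functions on `Sᶜ`. -/
def vanishEquiv {n : ℕ} (S : Finset (Fin n)) :
    {w : Fin n → ZMod 2 // ∀ i ∈ S, w i = 0} ≃ ((Sᶜ : Finset (Fin n)) → ZMod 2) where
  toFun w i := w.1 i
  invFun f := ⟨fun i => if h : i ∈ Sᶜ then f ⟨i, h⟩ else 0, by
    intro i hi
    simp [Finset.mem_compl, hi]⟩
  left_inv w := by
    ext i
    by_cases h : i ∈ Sᶜ
    · simp [h]
    · simp only [h, dif_neg, not_false_iff]
      exact (w.2 i (by simpa using h)).symm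
  right_inv f := by
    ext i
    simp [i.2]

lemma vanishEquiv_zero_iff {n : ℕ} (S : Finset (Fin n))
    (w : {w : Fin n → ZMod 2 // ∀ i ∈ S, w i = 0}) :
    vanishEquiv S w = 0 ↔ w.1 = 0 := by
  constructor
  · intro h
    have h0 : vanishEquiv S ⟨0, fun i _ => rfl⟩ = 0 := rfl
    have := (vanishEquiv S).injective (h.trans h0.symm)
    simpa [Subtype.ext_iff] using this
  · intro h
    ext i
    simpa [vanishEquiv] using congrFun h i.1

lemma card_nonzero_vanish {n : ℕ} (S : Finset (Fin n)) :
    Fintype.card {w : Fin n → ZMod 2 // w ≠ 0 ∧ ∀ i ∈ S, w i = 0}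
      = 2 ^ ((Sᶜ : Finset (Fin n)).card) - 1 := by
  have e1 : {w : Fin n → ZMod 2 // w ≠ 0 ∧ ∀ i ∈ S, w i = 0}
      ≃ {w : {w : Fin n → ZMod 2 // ∀ i ∈ S, w i = 0} // w.1 ≠ 0} :=
    ((Equiv.subtypeSubtypeEquivSubtypeInter _ _).trans
      (Equiv.subtypeEquivRight (fun w => and_comm))).symm
  have e2 : {w : {w : Fin n → ZMod 2 // ∀ i ∈ S, w i = 0} // w.1 ≠ 0}
      ≃ {f : ((Sᶜ : Finset (Fin n)) → ZMod 2) // f ≠ 0} :=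
    (vanishEquiv S).subtypeEquiv (by
      intro w
      rw [not_iff_not]
      exact (vanishEquiv_zero_iff S w).symm)
  rw [Fintype.card_congr (e1.trans e2)]
  have : Fintype.card {f : ((Sᶜ : Finset (Fin n)) → ZMod 2) // ¬ f = 0}
      = Fintype.card ((Sᶜ : Finset (Fin n)) → ZMod 2)
        - Fintype.card {f : ((Sᶜ : Finset (Fin n)) → ZMod 2) // f = 0} :=
    Fintype.card_subtype_compl _
  simp only [ne_eq]
  rw [this, Fintype.card_subtype_eq (0 : (Sᶜ : Finset (Fin n)) → ZMod 2)]
  simp [Fintype.card_fun]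
  rw [Finset.card_compl]
  simp

lemma supp_nonempty {n : ℕ} (u : Vtx n) : ∃ i, i ∈ supp u.1 ∧ u.1 i ≠ 0 := by
  have : ∃ i, u.1 i ≠ 0 := by
    by_contra h
    push_neg at h
    exact u.2 (funext h)
  obtain ⟨i, hi⟩ := this
  exact ⟨i, by simp [supp, hi], hi⟩

lemma not_adj_iff {n : ℕ} (u w : Vtx n) :
    ¬ (NZC n).Adj u w ↔ (w = u ∨ ∀ i ∈ supp u.1, w.1 i = 0) := by
  show ¬(u ≠ w ∧ ∃ i, u.1 i ≠ 0 ∧ w.1 i ≠ 0) ↔ _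
  constructor
  · intro h
    by_cases hw : w = u
    · exact Or.inl hw
    · refine Or.inr fun i hi => ?_
      by_contra hwi
      exact h ⟨fun he => hw he.symm, i, (Finset.mem_filter.mp hi).2, hwi⟩
  · rintro (rfl | h) ⟨hne, i, hui, hwi⟩
    · exact hne rfl
    · exact hwi (h i (Finset.mem_filter.mpr ⟨Finset.mem_univ i, hui⟩))

lemma degree_NZC {n : ℕ} (u : Vtx n) :
    (NZC n).degree u + 2 ^ (n - (supp u.1).card) = 2 ^ n - 1 := by
  classical
  have hcardV : Fintype.card (Vtx n) = 2 ^ n - 1 := by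
    have : Fintype.card {v : Fin n → ZMod 2 // ¬ v = 0}
        = Fintype.card (Fin n → ZMod 2) - Fintype.card {v : Fin n → ZMod 2 // v = 0} :=
      Fintype.card_subtype_compl _
    simpa [Fintype.card_fun, Fintype.card_subtype_eq (0 : Fin n → ZMod 2)] using this
  -- degree as card of adjacency subtype
  have hdeg : (NZC n).degree u = Fintype.card {w : Vtx n // (NZC n).Adj u w} := by
    rw [← SimpleGraph.card_neighborSet_eq_degree]
    exact Fintype.card_congr (Equiv.refl _)
  -- complement count
  have hcompl : Fintype.card {w : Vtx n // ¬ (NZC n).Adj u w}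
      = Fintype.card (Vtx n) - Fintype.card {w : Vtx n // (NZC n).Adj u w} :=
    Fintype.card_subtype_compl _
  have hle : Fintype.card {w : Vtx n // (NZC n).Adj u w} ≤ Fintype.card (Vtx n) :=
    Fintype.card_subtype_le _
  -- compute the complement cardinality
  have hcompl2 : Fintype.card {w : Vtx n // ¬ (NZC n).Adj u w} = 2 ^ (n - (supp u.1).card) := by
    have e : {w : Vtx n // ¬ (NZC n).Adj u w}
        ≃ {w : Vtx n // w = u ∨ ∀ i ∈ supp u.1, w.1 i = 0} :=
      Equiv.subtypeEquivRight (fun w => not_adj_iff u w)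
    rw [Fintype.card_congr e]
    have hdisj : Disjoint (fun w : Vtx n => w = u) (fun w : Vtx n => ∀ i ∈ supp u.1, w.1 i = 0) := by
      rw [Pi.disjoint_iff]
      intro w
      simp only [Prop.disjoint_iff]
      rintro ⟨rfl, h2⟩
      obtain ⟨i, hi, hui⟩ := supp_nonempty w
      exact hui (h2 i hi)
    rw [Fintype.card_subtype_or_disjoint _ _ hdisj, Fintype.card_subtype_eq u]
    have e2 : {w : Vtx n // ∀ i ∈ supp u.1, w.1 i = 0}
        ≃ {w : Fin n → ZMod 2 // w ≠ 0 ∧ ∀ i ∈ supp u.1, w i = 0} :=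
      Equiv.subtypeSubtypeEquivSubtypeInter (fun w : Fin n → ZMod 2 => w ≠ 0)
        (fun w => ∀ i ∈ supp u.1, w i = 0)
    rw [Fintype.card_congr e2, card_nonzero_vanish]
    have hcc : ((supp u.1)ᶜ : Finset (Fin n)).card = n - (supp u.1).card := by
      rw [Finset.card_compl]
      simp
    rw [hcc]
    have : 1 ≤ 2 ^ (n - (supp u.1).card) := Nat.one_le_two_pow
    omega
  rw [hdeg, ← hcompl2]
  omega

lemma supp_card_le {n : ℕ} (u : Vtx n) : (supp u.1).card ≤ n := by
  simpa using Finset.card_le_univ (supp u.1)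

/-- Vertices with supports of different sizes cannot be mapped to one another by an
automorphism of the non-zero component graph. -/
theorem no_auto_of_card_ne (n : ℕ) (hn : 3 ≤ n) (u v : Vtx n) (r s : ℕ)
    (hu : (supp u.1).card = r) (hv : (supp v.1).card = s) (hrs : r ≠ s)
    (g : NZC n ≃g NZC n) : g u ≠ v := by
  intro hguv
  have hdeg : (NZC n).degree u = (NZC n).degree v := by
    rw [← hguv]
    rw [← SimpleGraph.card_neighborSet_eq_degree, ← SimpleGraph.card_neighborSet_eq_degree]
    exact Fintype.card_congr (g.mapNeighborSet u)
  have h1 := degree_NZC u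
  have h2 := degree_NZC v
  rw [hu] at h1
  rw [hv] at h2
  have hpow : 2 ^ (n - r) = 2 ^ (n - s) := by omega
  have hnr : n - r = n - s := Nat.pow_right_injective (le_refl 2) hpow
  have hru : r ≤ n := hu ▸ supp_card_le u
  have hsv : s ≤ n := hv ▸ supp_card_le v
  omega
end

section
/- Let b_l be a basis vector and let g be an automorphism of G(V) fixing b_l. Then for every vertex u, b_l lies in the support of u if and only if b_l lies in the support of g(u). -/
open Finset

lemma mem_supp_iff {n : ℕ} (v : Fin n → ZMod 2) (i : Fin n) :
    i ∈ supp v ↔ v i ≠ 0 := by simp [supp]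

lemma adj_iff {n : ℕ} (l : Fin n) (bl : Vtx n) (hbl : supp bl.1 = {l})
    (v : Vtx n) (hv : v ≠ bl) : l ∈ supp v.1 ↔ (NZC n).Adj v bl := by
  have hbll : bl.1 l ≠ 0 := by
    have : l ∈ supp bl.1 := by rw [hbl]; simp
    exact (mem_supp_iff _ _).1 this
  constructor
  · intro h
    exact ⟨hv, l, (mem_supp_iff _ _).1 h, hbll⟩
  · rintro ⟨-, i, h1, h2⟩
    have : i ∈ supp bl.1 := (mem_supp_iff _ _).2 h2
    rw [hbl, Finset.mem_singleton] at this
    subst this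
    exact (mem_supp_iff _ _).2 h1

/-- If an automorphism fixes the basis vector `b_l`, then `b_l` lies in the support of
`u` iff it lies in the support of `g u`. -/
theorem basis_mem_supp_iff (n : ℕ) (l : Fin n) (bl : Vtx n) (hbl : supp bl.1 = {l})
    (g : NZC n ≃g NZC n) (hg : g bl = bl) (u : Vtx n) :
    l ∈ supp u.1 ↔ l ∈ supp (g u).1 := by
  by_cases hu : u = bl
  · subst hu; rw [hg]
  · have hgu : g u ≠ bl := by
      rw [← hg]
      exact fun h => hu (g.injective h)
    rw [adj_iff l bl hbl u hu, adj_iff l bl hbl (g u) hgu, ← hg,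
      g.map_adj_iff, hg]
end

section
/- Let b_l, b_m be distinct basis vectors and g an automorphism of G(V) with g(b_l) = b_m and g(b_m) = b_l. If u is a vertex with b_l ∈ S_u and b_m ∉ S_u, then b_l ∉ S_{g(u)} and b_m ∈ S_{g(u)}. -/
open Finset

/-- If `g` swaps the basis vectors `b_l, b_m` and `b_l ∈ S_u`, `b_m ∉ S_u`, then
`b_l ∉ S_{g(u)}` and `b_m ∈ S_{g(u)}`. -/
theorem swap_supp_one (n : ℕ) (hn : 3 ≤ n) (l m : Fin n) (hlm : l ≠ m)
    (bl bm : Vtx n) (hbl : supp bl.1 = {l}) (hbm : supp bm.1 = {m})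
    (g : NZC n ≃g NZC n) (h1 : g bl = bm) (h2 : g bm = bl)
    (u : Vtx n) (hu1 : l ∈ supp u.1) (hu2 : m ∉ supp u.1) :
    l ∉ supp (g u).1 ∧ m ∈ supp (g u).1 := by
  have mem_supp : ∀ (v : Fin n → ZMod 2) (i : Fin n), i ∈ supp v ↔ v i ≠ 0 := by
    intro v i; simp [supp]
  -- bl l ≠ 0, bm m ≠ 0
  have hbll : bl.1 l ≠ 0 := (mem_supp _ _).1 (hbl ▸ Finset.mem_singleton_self l)
  have hbmm : bm.1 m ≠ 0 := (mem_supp _ _).1 (hbm ▸ Finset.mem_singleton_self m)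
  have hul : u.1 l ≠ 0 := (mem_supp _ _).1 hu1
  have hum : u.1 m = 0 := by
    by_contra h; exact hu2 ((mem_supp _ _).2 h)
  have hune : u ≠ bm := by
    intro h; rw [h] at hum; exact hbmm hum
  by_cases hub : u = bl
  · subst hub
    rw [h1]
    constructor
    · rw [hbm]; simp [hlm]
    · rw [hbm]; exact Finset.mem_singleton_self m
  · -- u adjacent to bl
    have hadj : (NZC n).Adj u bl := ⟨hub, l, hul, hbll⟩
    have hadj' : (NZC n).Adj (g u) bm := by
      rw [← h1]; exact g.map_adj_iff.2 hadj
    obtain ⟨-, i, hi1, hi2⟩ := hadj'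
    have him : i = m := by
      have := (mem_supp _ _).2 hi2
      rw [hbm, Finset.mem_singleton] at this; exact this
    rw [him] at hi1
    refine ⟨?_, (mem_supp _ _).2 hi1⟩
    -- u not adjacent to bm
    have hnadj : ¬ (NZC n).Adj u bm := by
      rintro ⟨-, j, hj1, hj2⟩
      have : j = m := by
        have := (mem_supp _ _).2 hj2
        rw [hbm, Finset.mem_singleton] at this; exact this
      subst this; exact hj1 hum
    have hnadj' : ¬ (NZC n).Adj (g u) bl := by
      rw [← h2]; exact fun h => hnadj (g.map_adj_iff.1 h)
    intro hl
    have hgul : (g u).1 l ≠ 0 := (mem_supp _ _).1 hl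
    have hne : g u ≠ bl := by
      intro h
      have : u = bm := g.injective (by rw [h, h2])
      exact hune this
    exact hnadj' ⟨hne, l, hgul, hbll⟩
end

section
/- Let b_l, b_m be distinct basis vectors and g an automorphism of G(V) with g(b_l) = b_m and g(b_m) = b_l. For any vertex u: both b_l, b_m ∈ S_u if and only if both b_l, b_m ∈ S_{g(u)}. -/
open Finset

lemma both_iff_adj {n : ℕ} (l m : Fin n) (hlm : l ≠ m)
    (bl bm : Vtx n) (hbl : supp bl.1 = {l}) (hbm : supp bm.1 = {m}) (u : Vtx n) :
    (l ∈ supp u.1 ∧ m ∈ supp u.1) ↔ ((NZC n).Adj u bl ∧ (NZC n).Adj u bm) := by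
  have hbll : bl.1 l ≠ 0 := by
    have : l ∈ supp bl.1 := by rw [hbl]; exact Finset.mem_singleton_self l
    rwa [mem_supp_iff] at this
  have hbmm : bm.1 m ≠ 0 := by
    have : m ∈ supp bm.1 := by rw [hbm]; exact Finset.mem_singleton_self m
    rwa [mem_supp_iff] at this
  constructor
  · rintro ⟨hl, hm⟩
    rw [mem_supp_iff] at hl hm
    refine ⟨⟨?_, l, hl, hbll⟩, ⟨?_, m, hm, hbmm⟩⟩
    · intro h; subst h
      have : m ∈ supp u.1 := (mem_supp_iff _ _).2 hm
      rw [hbl, Finset.mem_singleton] at this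
      exact hlm this.symm
    · intro h; subst h
      have : l ∈ supp u.1 := (mem_supp_iff _ _).2 hl
      rw [hbm, Finset.mem_singleton] at this
      exact hlm this
  · rintro ⟨⟨-, i, hui, hbi⟩, ⟨-, j, huj, hbj⟩⟩
    have hi : i ∈ supp bl.1 := (mem_supp_iff _ _).2 hbi
    have hj : j ∈ supp bm.1 := (mem_supp_iff _ _).2 hbj
    rw [hbl, Finset.mem_singleton] at hi
    rw [hbm, Finset.mem_singleton] at hj
    subst hi; subst hj
    exact ⟨(mem_supp_iff _ _).2 hui, (mem_supp_iff _ _).2 huj⟩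

/-- If `g` swaps the basis vectors `b_l, b_m`, then both `b_l, b_m ∈ S_u` iff both
`b_l, b_m ∈ S_{g(u)}`. -/
theorem swap_supp_both (n : ℕ) (hn : 3 ≤ n) (l m : Fin n) (hlm : l ≠ m)
    (bl bm : Vtx n) (hbl : supp bl.1 = {l}) (hbm : supp bm.1 = {m})
    (g : NZC n ≃g NZC n) (h1 : g bl = bm) (h2 : g bm = bl) (u : Vtx n) :
    (l ∈ supp u.1 ∧ m ∈ supp u.1) ↔ (l ∈ supp (g u).1 ∧ m ∈ supp (g u).1) := by
  rw [both_iff_adj l m hlm bl bm hbl hbm u,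
      both_iff_adj l m hlm bl bm hbl hbm (g u)]
  have e1 : (NZC n).Adj u bl ↔ (NZC n).Adj (g u) bm := by
    rw [← h1, ← g.map_adj_iff]
  have e2 : (NZC n).Adj u bm ↔ (NZC n).Adj (g u) bl := by
    rw [← h2, ← g.map_adj_iff]
  rw [e1, e2]
  tauto
end

section
/- Let u, v be vertices of G(V) with |S_u| = |S_v| and let g be an automorphism of G(V) with g(u) = v and g(v) = u. If b is a basis vector in S_u ∩ S_v, then g(b) ∈ S_u ∩ S_v; and if b ∈ S_u \ S_v, then g(b) ∈ S_v \ S_u. -/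
open Finset

lemma mem_supp {n : ℕ} {v : Fin n → ZMod 2} {i : Fin n} : i ∈ supp v ↔ v i ≠ 0 := by
  simp [supp]

lemma supp_mem_singleton {n : ℕ} {x : Vtx n} {i k : Fin n} (hx : supp x.1 = {i})
    (hk : x.1 k ≠ 0) : k = i := by
  have : k ∈ supp x.1 := mem_supp.mpr hk
  rw [hx, Finset.mem_singleton] at this; exact this

lemma adj_or_eq_iff {n : ℕ} {x w : Vtx n} {i : Fin n} (hx : supp x.1 = {i}) :
    ((NZC n).Adj x w ∨ x = w) ↔ i ∈ supp w.1 := by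
  have hxi : x.1 i ≠ 0 := mem_supp.mp (hx ▸ Finset.mem_singleton_self i)
  constructor
  · rintro (⟨-, k, hk1, hk2⟩ | rfl)
    · exact mem_supp.mpr (supp_mem_singleton hx hk1 ▸ hk2)
    · rw [hx]; exact Finset.mem_singleton_self i
  · intro hw
    by_cases h : x = w
    · exact Or.inr h
    · exact Or.inl ⟨h, i, hxi, mem_supp.mp hw⟩

/-- basis vector as vertex -/
def E {n : ℕ} (i : Fin n) : Vtx n :=
  ⟨Pi.single i 1, by
    intro h
    have := congrFun h i
    simp [Pi.single_apply] at this⟩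

lemma E_ne_zero {n : ℕ} {i k : Fin n} (h : (E i).1 k ≠ 0) : k = i := by
  by_contra hk
  simp [E, Pi.single_apply, hk] at h

lemma singleton_of_clique {n : ℕ} {x : Vtx n}
    (h : ∀ y z : Vtx n, (NZC n).Adj x y → (NZC n).Adj x z → y = z ∨ (NZC n).Adj y z) :
    ∃ i, supp x.1 = {i} := by
  obtain ⟨i, hi⟩ := Function.ne_iff.mp x.2
  simp only [Pi.zero_apply] at hi
  refine ⟨i, ?_⟩
  apply Finset.eq_singleton_iff_unique_mem.mpr
  refine ⟨mem_supp.mpr hi, fun j hj => ?_⟩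
  rw [mem_supp] at hj
  by_contra hji
  have hxei : x ≠ E i := by
    intro hxe
    have : x.1 j ≠ 0 := hj
    rw [hxe] at this
    exact hji (E_ne_zero this)
  have hxej : x ≠ E j := by
    intro hxe
    have : x.1 i ≠ 0 := hi
    rw [hxe] at this
    exact hji (E_ne_zero this).symm
  have a1 : (NZC n).Adj x (E i) := ⟨hxei, i, hi, by simp [E]⟩
  have a2 : (NZC n).Adj x (E j) := ⟨hxej, j, hj, by simp [E]⟩
  rcases h _ _ a1 a2 with heq | ⟨-, k, hk1, hk2⟩
  · have := congrFun (congrArg Subtype.val heq) i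
    simp [E, Pi.single_apply, Ne.symm hji] at this
  · exact hji ((E_ne_zero hk1).symm.trans (E_ne_zero hk2)).symm

lemma clique_of_singleton {n : ℕ} {x : Vtx n} {i : Fin n} (hx : supp x.1 = {i})
    {y z : Vtx n} (hy : (NZC n).Adj x y) (hz : (NZC n).Adj x z) :
    y = z ∨ (NZC n).Adj y z := by
  obtain ⟨-, k, hk1, hk2⟩ := hy
  obtain ⟨-, l, hl1, hl2⟩ := hz
  by_cases h : y = z
  · exact Or.inl h
  · exact Or.inr ⟨h, i, supp_mem_singleton hx hk1 ▸ hk2,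
      supp_mem_singleton hx hl1 ▸ hl2⟩

/-- If `g` swaps `u` and `v` (with equal support sizes), then a basis vector in
`S_u ∩ S_v` is mapped to a basis vector in `S_u ∩ S_v`, and a basis vector in
`S_u \ S_v` is mapped to a basis vector in `S_v \ S_u`. -/
theorem swap_skeleton (n : ℕ) (hn : 3 ≤ n) (u v : Vtx n)
    (hcard : (supp u.1).card = (supp v.1).card)
    (g : NZC n ≃g NZC n) (hgu : g u = v) (hgv : g v = u)
    (b : Vtx n) (i : Fin n) (hb : supp b.1 = {i}) :
    (i ∈ supp u.1 ∩ supp v.1 → ∃ j, supp (g b).1 = {j} ∧ j ∈ supp u.1 ∩ supp v.1) ∧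
    (i ∈ supp u.1 \ supp v.1 → ∃ j, supp (g b).1 = {j} ∧ j ∈ supp v.1 \ supp u.1) := by
  have hclique : ∀ y z : Vtx n, (NZC n).Adj (g b) y → (NZC n).Adj (g b) z →
      y = z ∨ (NZC n).Adj y z := by
    intro y z hy hz
    have hy' : (NZC n).Adj b (g.symm y) := by
      rw [← g.map_adj_iff]; simpa using hy
    have hz' : (NZC n).Adj b (g.symm z) := by
      rw [← g.map_adj_iff]; simpa using hz
    rcases clique_of_singleton hb hy' hz' with h | h
    · exact Or.inl (g.symm.injective h)
    · right
      have := g.map_adj_iff.mpr h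
      simpa using this
  obtain ⟨j, hj⟩ := singleton_of_clique hclique
  have key : ∀ w w' : Vtx n, g w = w' → (i ∈ supp w.1 ↔ j ∈ supp w'.1) := by
    intro w w' hw
    rw [← adj_or_eq_iff hb, ← adj_or_eq_iff hj, ← hw]
    constructor
    · rintro (h | h)
      · exact Or.inl (g.map_adj_iff.mpr h)
      · exact Or.inr (congrArg g h)
    · rintro (h | h)
      · exact Or.inl (g.map_adj_iff.mp h)
      · exact Or.inr (g.injective h)
  have huv := key u v hgu
  have hvu := key v u hgv
  constructor
  · intro h
    rw [Finset.mem_inter] at h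
    exact ⟨j, hj, Finset.mem_inter.mpr ⟨hvu.mp h.2, huv.mp h.1⟩⟩
  · intro h
    rw [Finset.mem_sdiff] at h
    refine ⟨j, hj, Finset.mem_sdiff.mpr ⟨huv.mp h.1, fun hju => h.2 (hvu.mpr hju)⟩⟩
end

section
/- Let n ≥ 4, let b_l, b_m be distinct basis vectors, and let g be an automorphism of G(V) with g(b_l) = b_m and g(b_m) = b_l. Then g fixes the vertex u = b_l + b_m. -/
open Finset

/-- Auxiliary relation: supports of `v` and `w` intersect. -/
def Pr {n : ℕ} (v w : Vtx n) : Prop := ∃ i, v.1 i ≠ 0 ∧ w.1 i ≠ 0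

lemma Pr_iff_adj {n : ℕ} (v w : Vtx n) : Pr v w ↔ ((NZC n).Adj v w ∨ v = w) := by
  constructor
  · rintro ⟨i, hi1, hi2⟩
    by_cases h : v = w
    · exact Or.inr h
    · exact Or.inl ⟨h, i, hi1, hi2⟩
  · rintro (⟨h, i, hi1, hi2⟩ | rfl)
    · exact ⟨i, hi1, hi2⟩
    · obtain ⟨i, hi⟩ := Function.ne_iff.mp v.2
      exact ⟨i, hi, hi⟩

lemma Pr_map {n : ℕ} (g : NZC n ≃g NZC n) (v w : Vtx n) : Pr (g v) (g w) ↔ Pr v w := by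
  rw [Pr_iff_adj, Pr_iff_adj, g.map_adj_iff]
  constructor
  · rintro (h | h)
    · exact Or.inl h
    · exact Or.inr (g.toEquiv.injective h)
  · rintro (h | rfl)
    · exact Or.inl h
    · exact Or.inr rfl

/-- If `n ≥ 4` and `g` swaps the basis vectors `b_l, b_m`, then `g` fixes the vertex
with support `{b_l, b_m}`. -/
theorem swap_fixes_pair_vertex (n : ℕ) (hn : 4 ≤ n) (l m : Fin n) (hlm : l ≠ m)
    (bl bm : Vtx n) (hbl : supp bl.1 = {l}) (hbm : supp bm.1 = {m})
    (g : NZC n ≃g NZC n) (h1 : g bl = bm) (h2 : g bm = bl)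
    (u : Vtx n) (hu : supp u.1 = {l, m}) : g u = u := by
  have mem_supp : ∀ (v : Fin n → ZMod 2) i, i ∈ supp v ↔ v i ≠ 0 := by
    intro v i; simp [supp]
  have hul : ∀ i, u.1 i ≠ 0 ↔ (i = l ∨ i = m) := by
    intro i; rw [← mem_supp, hu]; simp
  have hbl' : ∀ i, bl.1 i ≠ 0 ↔ i = l := by
    intro i; rw [← mem_supp, hbl]; simp
  have hbm' : ∀ i, bm.1 i ≠ 0 ↔ i = m := by
    intro i; rw [← mem_supp, hbm]; simp
  -- characterization of Pr against u, bl, bm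
  have hPu : ∀ w : Vtx n, Pr u w ↔ (w.1 l ≠ 0 ∨ w.1 m ≠ 0) := by
    intro w
    constructor
    · rintro ⟨i, hi1, hi2⟩
      rcases (hul i).mp hi1 with rfl | rfl
      · exact Or.inl hi2
      · exact Or.inr hi2
    · rintro (h | h)
      · exact ⟨l, (hul l).mpr (Or.inl rfl), h⟩
      · exact ⟨m, (hul m).mpr (Or.inr rfl), h⟩
  have hPbl : ∀ w : Vtx n, Pr bl w ↔ w.1 l ≠ 0 := by
    intro w
    constructor
    · rintro ⟨i, hi1, hi2⟩
      rcases (hbl' i).mp hi1 with rfl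
      exact hi2
    · intro h; exact ⟨l, (hbl' l).mpr rfl, h⟩
  have hPbm : ∀ w : Vtx n, Pr bm w ↔ w.1 m ≠ 0 := by
    intro w
    constructor
    · rintro ⟨i, hi1, hi2⟩
      rcases (hbm' i).mp hi1 with rfl
      exact hi2
    · intro h; exact ⟨m, (hbm' m).mpr rfl, h⟩
  -- basis vertices
  have key : ∀ i, (g u).1 i ≠ 0 ↔ u.1 i ≠ 0 := by
    intro i
    set e : Vtx n := ⟨Pi.single i 1, by
      intro h
      have := congrFun h i
      simp [Pi.single_eq_same] at this⟩ with he
    have hPe : ∀ v : Vtx n, Pr v e ↔ v.1 i ≠ 0 := by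
      intro v
      constructor
      · rintro ⟨j, hj1, hj2⟩
        have : j = i := by
          by_contra hji
          apply hj2
          simp [he, Pi.single_apply, hji]
        rwa [this] at hj1
      · intro h
        refine ⟨i, h, ?_⟩
        simp [he, Pi.single_eq_same]
    have c1 : Pr (g u) e ↔ Pr u (g.symm e) := by
      have := Pr_map g u (g.symm e)
      rwa [g.apply_symm_apply] at this
    have c2 : Pr bl (g.symm e) ↔ Pr bm e := by
      have := Pr_map g bl (g.symm e)
      rw [g.apply_symm_apply, h1] at this
      exact this.symm
    have c3 : Pr bm (g.symm e) ↔ Pr bl e := by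
      have := Pr_map g bm (g.symm e)
      rw [g.apply_symm_apply, h2] at this
      exact this.symm
    rw [← hPe (g u), c1, hPu, ← hPbl, ← hPbm, c2, c3, hPbm, hPbl, or_comm, ← hPu, hPe]
  have hzm : ∀ a b : ZMod 2, (a ≠ 0 ↔ b ≠ 0) → a = b := by decide
  apply Subtype.ext
  funext i
  exact hzm _ _ (key i)
end

section
/- Let n ≥ 4, let b_l, b_m be distinct basis vectors, and let g be an automorphism of G(V) with g(b_l) = b_m and g(b_m) = b_l. Then g fixes the vertex u whose support is the complement of {b_l, b_m} in the basis (i.e., u = Σ_{i ≠ l,m} b_i). -/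
open Finset

lemma eq_of_supp_eq {n : ℕ} {v w : Fin n → ZMod 2} (h : supp v = supp w) : v = w := by
  funext i
  have h2 : (v i ≠ 0) ↔ (w i ≠ 0) := by
    simpa [mem_supp] using Finset.ext_iff.mp h i
  have key : ∀ a b : ZMod 2, ((a ≠ 0) ↔ (b ≠ 0)) → a = b := by decide
  exact key _ _ h2

lemma adj_iff_s9 {n : ℕ} {v w : Vtx n} :
    (NZC n).Adj v w ↔ v ≠ w ∧ ∃ i, v.1 i ≠ 0 ∧ w.1 i ≠ 0 := Iff.rfl

/-- The characterizing predicate: non-adjacent to `bl` and `bm`, and adjacent to every other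
vertex which is non-adjacent to both and different from `bl`, `bm`. -/
def Good {n : ℕ} (bl bm v : Vtx n) : Prop :=
  ¬ (NZC n).Adj v bl ∧ ¬ (NZC n).Adj v bm ∧
    ∀ x : Vtx n, ¬ (NZC n).Adj x bl → ¬ (NZC n).Adj x bm → x ≠ bl → x ≠ bm → x ≠ v →
      (NZC n).Adj v x

lemma not_adj_basis {n : ℕ} {b x : Vtx n} {l : Fin n} (hb : supp b.1 = {l})
    (hna : ¬ (NZC n).Adj x b) (hne : x ≠ b) : x.1 l = 0 := by
  by_contra hx
  have hbl : b.1 l ≠ 0 := mem_supp.mp (by rw [hb]; exact Finset.mem_singleton_self l)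
  exact hna ⟨hne, l, hx, hbl⟩

lemma basis_coord_zero {n : ℕ} {b : Vtx n} {l i : Fin n} (hb : supp b.1 = {l}) (hi : i ≠ l) :
    b.1 i = 0 := by
  by_contra hx
  exact hi (by simpa [hb] using mem_supp.mpr hx)

lemma good_u {n : ℕ} (hn : 4 ≤ n) {l m : Fin n} (hlm : l ≠ m) {bl bm u : Vtx n}
    (hbl : supp bl.1 = {l}) (hbm : supp bm.1 = {m})
    (hu : supp u.1 = Finset.univ \ {l, m}) : Good bl bm u := by
  have hul : u.1 l = 0 := by
    by_contra hx
    have := mem_supp.mpr hx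
    rw [hu] at this
    simp at this
  have hum : u.1 m = 0 := by
    by_contra hx
    have := mem_supp.mpr hx
    rw [hu] at this
    simp at this
  refine ⟨?_, ?_, ?_⟩
  · rintro ⟨-, i, hi1, hi2⟩
    have : i = l := by
      by_contra h
      exact hi2 (basis_coord_zero hbl h)
    exact hi1 (this ▸ hul)
  · rintro ⟨-, i, hi1, hi2⟩
    have : i = m := by
      by_contra h
      exact hi2 (basis_coord_zero hbm h)
    exact hi1 (this ▸ hum)
  · intro x hxl hxm hxbl hxbm hxu
    have hx0 : x.1 l = 0 := not_adj_basis hbl hxl hxbl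
    have hx0' : x.1 m = 0 := not_adj_basis hbm hxm hxbm
    obtain ⟨i, hi⟩ : ∃ i, x.1 i ≠ 0 := by
      by_contra h
      push_neg at h
      exact x.2 (funext fun i => h i)
    have hil : i ≠ l := fun h => hi (h ▸ hx0)
    have him : i ≠ m := fun h => hi (h ▸ hx0')
    have hui : u.1 i ≠ 0 := by
      apply mem_supp.mp
      rw [hu]
      simp [hil, him]
    exact ⟨fun h => hxu h.symm, i, hui, hi⟩

lemma good_unique {n : ℕ} (hn : 4 ≤ n) {l m : Fin n} (hlm : l ≠ m) {bl bm u v : Vtx n}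
    (hbl : supp bl.1 = {l}) (hbm : supp bm.1 = {m})
    (hu : supp u.1 = Finset.univ \ {l, m}) (hv : Good bl bm v) : v = u := by
  obtain ⟨hvl, hvm, hmax⟩ := hv
  -- first: every i ∉ {l, m} is in supp v
  have hsup : ∀ i : Fin n, i ≠ l → i ≠ m → v.1 i ≠ 0 := by
    intro i hil him hvi
    -- build the basis vertex e_i
    set e : Vtx n := ⟨fun j => if j = i then 1 else 0, by
      intro h
      have := congrFun h i
      simp at this⟩ with he
    have hei : e.1 i ≠ 0 := by simp [he]
    have hej : ∀ j, j ≠ i → e.1 j = 0 := by intro j hj; simp [he, hj]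
    have hebl : e ≠ bl := by
      intro h
      have hmem : i ∈ supp bl.1 := mem_supp.mpr (h ▸ hei)
      rw [hbl, Finset.mem_singleton] at hmem
      exact hil hmem
    have hebm : e ≠ bm := by
      intro h
      have hmem : i ∈ supp bm.1 := mem_supp.mpr (h ▸ hei)
      rw [hbm, Finset.mem_singleton] at hmem
      exact him hmem
    have hev : e ≠ v := by
      intro h
      exact (h ▸ hei) hvi
    have hnal : ¬ (NZC n).Adj e bl := by
      rintro ⟨-, j, hj1, hj2⟩
      have hji : j = i := by by_contra h; exact hj1 (hej j h)
      exact hil (hji ▸ (by by_contra h; exact hj2 (basis_coord_zero hbl h) : j = l))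
    have hnam : ¬ (NZC n).Adj e bm := by
      rintro ⟨-, j, hj1, hj2⟩
      have hji : j = i := by by_contra h; exact hj1 (hej j h)
      exact him (hji ▸ (by by_contra h; exact hj2 (basis_coord_zero hbm h) : j = m))
    obtain ⟨-, j, hj1, hj2⟩ := hmax e hnal hnam hebl hebm hev
    have hji : j = i := by by_contra h; exact hj2 (hej j h)
    exact (hji ▸ hj1) hvi
  -- v ≠ bl, v ≠ bm
  have hvnebl : v ≠ bl := by
    intro h
    obtain ⟨i, hi⟩ : ∃ i : Fin n, i ≠ l ∧ i ≠ m := by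
      have hcard : ({l, m} : Finset (Fin n)).card ≤ 2 := card_insert_le _ _ |>.trans (by simp)
      have : (Finset.univ \ ({l, m} : Finset (Fin n))).Nonempty := by
        rw [← Finset.card_pos, Finset.card_sdiff_of_subset (subset_univ _)]
        simp only [Finset.card_univ, Fintype.card_fin]
        omega
      obtain ⟨i, hi⟩ := this
      simp only [Finset.mem_sdiff, Finset.mem_insert, Finset.mem_singleton] at hi
      exact ⟨i, fun hh => hi.2 (Or.inl hh), fun hh => hi.2 (Or.inr hh)⟩
    have := hsup i hi.1 hi.2
    rw [h] at this
    exact this (basis_coord_zero hbl hi.1)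
  have hvnebm : v ≠ bm := by
    intro h
    obtain ⟨i, hi⟩ : ∃ i : Fin n, i ≠ l ∧ i ≠ m := by
      have : (Finset.univ \ ({l, m} : Finset (Fin n))).Nonempty := by
        rw [← Finset.card_pos, Finset.card_sdiff_of_subset (subset_univ _)]
        have hcard : ({l, m} : Finset (Fin n)).card ≤ 2 := card_insert_le _ _ |>.trans (by simp)
        simp only [Finset.card_univ, Fintype.card_fin]
        omega
      obtain ⟨i, hi⟩ := this
      simp only [Finset.mem_sdiff, Finset.mem_insert, Finset.mem_singleton] at hi
      exact ⟨i, fun hh => hi.2 (Or.inl hh), fun hh => hi.2 (Or.inr hh)⟩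
    have := hsup i hi.1 hi.2
    rw [h] at this
    exact this (basis_coord_zero hbm hi.2)
  have hvl0 : v.1 l = 0 := not_adj_basis hbl hvl hvnebl
  have hvm0 : v.1 m = 0 := not_adj_basis hbm hvm hvnebm
  have : supp v.1 = Finset.univ \ {l, m} := by
    ext i
    simp only [mem_supp, Finset.mem_sdiff, Finset.mem_univ, true_and, Finset.mem_insert,
      Finset.mem_singleton]
    constructor
    · intro hi
      push_neg
      exact ⟨fun h => hi (h ▸ hvl0), fun h => hi (h ▸ hvm0)⟩
    · intro hi
      push_neg at hi
      exact hsup i hi.1 hi.2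
  exact Subtype.ext (eq_of_supp_eq (this.trans hu.symm))

/-- If `n ≥ 4` and `g` swaps the basis vectors `b_l, b_m`, then `g` fixes the vertex
whose support is the complement of `{b_l, b_m}` in the basis. -/
theorem swap_fixes_copair_vertex (n : ℕ) (hn : 4 ≤ n) (l m : Fin n) (hlm : l ≠ m)
    (bl bm : Vtx n) (hbl : supp bl.1 = {l}) (hbm : supp bm.1 = {m})
    (g : NZC n ≃g NZC n) (h1 : g bl = bm) (h2 : g bm = bl)
    (u : Vtx n) (hu : supp u.1 = Finset.univ \ {l, m}) : g u = u := by
  have hgood : Good bl bm u := good_u hn hlm hbl hbm hu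
  obtain ⟨hul, hum, hmax⟩ := hgood
  have hgu : Good bl bm (g u) := by
    refine ⟨?_, ?_, ?_⟩
    · rw [← h2]
      intro h
      exact hum (g.map_rel_iff.mp h)
    · rw [← h1]
      intro h
      exact hul (g.map_rel_iff.mp h)
    · intro x hxl hxm hxbl hxbm hxg
      set y := g.symm x with hy
      have hxy : g y = x := g.apply_symm_apply x
      have hyl : ¬ (NZC n).Adj y bl := by
        intro h
        exact hxm (by rw [← hxy, ← h1]; exact g.map_rel_iff.mpr h)
      have hym : ¬ (NZC n).Adj y bm := by
        intro h
        exact hxl (by rw [← hxy, ← h2]; exact g.map_rel_iff.mpr h)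
      have hybl : y ≠ bl := fun h => hxbm (by rw [← hxy, h, h1])
      have hybm : y ≠ bm := fun h => hxbl (by rw [← hxy, h, h2])
      have hyu : y ≠ u := fun h => hxg (by rw [← hxy, h])
      have := hmax y hyl hym hybl hybm hyu
      rw [← hxy]
      exact g.map_rel_iff.mpr this
  exact good_unique hn hlm hbl hbm hu hgu
end

section
/- Let u, v be distinct vertices of G(V) with |S_u| = |S_v|, and let w be a vertex with |S_w ∩ S_u| ≠ |S_w ∩ S_v|. Then every automorphism g of G(V) fixing w satisfies g(u) ≠ v. -/
open Finset

instance nzcDec (n : ℕ) : DecidableRel (NZC n).Adj := fun u v =>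
  inferInstanceAs (Decidable (u ≠ v ∧ ∃ i, u.1 i ≠ 0 ∧ v.1 i ≠ 0))

lemma card_zero_on (n : ℕ) (A : Finset (Fin n)) :
    (univ.filter fun x : Fin n → ZMod 2 => ∀ i ∈ A, x i = 0).card = 2 ^ (n - A.card) := by
  classical
  have h : (univ.filter fun x : Fin n → ZMod 2 => ∀ i ∈ A, x i = 0)
      = Fintype.piFinset (fun i => if i ∈ A then ({0} : Finset (ZMod 2)) else univ) := by
    ext x
    simp only [mem_filter, mem_univ, true_and, Fintype.mem_piFinset]
    constructor
    · intro h i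
      by_cases hi : i ∈ A <;> simp [hi, h]
    · intro h i hi
      have := h i
      simpa [hi] using this
  rw [h, Fintype.card_piFinset]
  have : ∀ i : Fin n, (if i ∈ A then ({0} : Finset (ZMod 2)) else univ).card
      = if i ∈ A then 1 else 2 := by
    intro i; by_cases hi : i ∈ A <;> simp [hi]
  simp only [this]
  rw [Finset.prod_ite, Finset.prod_const, Finset.prod_const]
  simp only [one_pow, one_mul, Finset.filter_not, Finset.filter_mem_eq_inter,
    Finset.univ_inter]
  rw [Finset.card_sdiff_of_subset (subset_univ A)]
  simp

lemma incl_excl (n : ℕ) (A B : Finset (Fin n)) :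
    (univ.filter fun x : Fin n → ZMod 2 =>
      (¬ ∀ i ∈ A, x i = 0) ∧ (¬ ∀ i ∈ B, x i = 0)).card
      + 2 ^ (n - A.card) + 2 ^ (n - B.card)
      = 2 ^ n + 2 ^ (n - (A ∪ B).card) := by
  classical
  set P := univ.filter fun x : Fin n → ZMod 2 => ∀ i ∈ A, x i = 0 with hP
  set Q := univ.filter fun x : Fin n → ZMod 2 => ∀ i ∈ B, x i = 0 with hQ
  have hPQ : (P ∩ Q).card = 2 ^ (n - (A ∪ B).card) := by
    have : P ∩ Q = univ.filter fun x : Fin n → ZMod 2 => ∀ i ∈ A ∪ B, x i = 0 := by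
      ext x
      simp only [hP, hQ, Finset.mem_inter, mem_filter, mem_univ, true_and, Finset.mem_union]
      constructor
      · rintro ⟨h1, h2⟩ i (hi | hi)
        exacts [h1 i hi, h2 i hi]
      · intro h
        exact ⟨fun i hi => h i (Or.inl hi), fun i hi => h i (Or.inr hi)⟩
    rw [this, card_zero_on]
  have hC : (univ.filter fun x : Fin n → ZMod 2 =>
      (¬ ∀ i ∈ A, x i = 0) ∧ (¬ ∀ i ∈ B, x i = 0)) = (P ∪ Q)ᶜ := by
    ext x
    simp [hP, hQ, mem_compl, not_or]
  have hcards : (P ∪ Q).card + (P ∩ Q).card = P.card + Q.card :=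
    Finset.card_union_add_card_inter P Q
  have htot : ((P ∪ Q)ᶜ).card + (P ∪ Q).card = 2 ^ n := by
    rw [Finset.card_compl]
    have hle : (P ∪ Q).card ≤ Fintype.card (Fin n → ZMod 2) := Finset.card_le_univ _
    have : Fintype.card (Fin n → ZMod 2) = 2 ^ n := by simp
    omega
  have hPc : P.card = 2 ^ (n - A.card) := card_zero_on n A
  have hQc : Q.card = 2 ^ (n - B.card) := card_zero_on n B
  rw [hC]
  omega


/-- The function-level filter decomposes as vertex common-neighbors plus the two endpoints,
when the two vertices are distinct and adjacent-supported. -/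
lemma count_eq (n : ℕ) (w u : Vtx n) (hwu : w ≠ u)
    (ht : (supp w.1 ∩ supp u.1).Nonempty) :
    (univ.filter fun x : Fin n → ZMod 2 =>
      (¬ ∀ i ∈ supp w.1, x i = 0) ∧ (¬ ∀ i ∈ supp u.1, x i = 0)).card
    = (univ.filter fun x : Vtx n => (NZC n).Adj w x ∧ (NZC n).Adj u x).card + 2 := by
  classical
  set S := univ.filter fun x : Vtx n => (NZC n).Adj w x ∧ (NZC n).Adj u x with hS
  have key : (univ.filter fun x : Fin n → ZMod 2 =>
      (¬ ∀ i ∈ supp w.1, x i = 0) ∧ (¬ ∀ i ∈ supp u.1, x i = 0))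
      = insert w.1 (insert u.1 (S.image Subtype.val)) := by
    have hmeet : ∀ (y : Vtx n) (x : Fin n → ZMod 2),
        (¬ ∀ i ∈ supp y.1, x i = 0) ↔ ∃ i, y.1 i ≠ 0 ∧ x i ≠ 0 := by
      intro y x
      simp only [supp, mem_filter, mem_univ, true_and, not_forall]
      constructor
      · rintro ⟨i, hi, hx⟩; exact ⟨i, hi, hx⟩
      · rintro ⟨i, hi, hx⟩; exact ⟨i, hi, hx⟩
    ext x
    simp only [mem_filter, mem_univ, true_and, Finset.mem_insert, Finset.mem_image,
      hmeet]
    constructor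
    · rintro ⟨⟨i, hwi, hxi⟩, ⟨j, huj, hxj⟩⟩
      have hx0 : x ≠ 0 := by
        intro h; rw [h] at hxi; exact hxi rfl
      by_cases hxw : x = w.1
      · exact Or.inl hxw
      by_cases hxu : x = u.1
      · exact Or.inr (Or.inl hxu)
      refine Or.inr (Or.inr ⟨⟨x, hx0⟩, ?_, rfl⟩)
      rw [hS, mem_filter]
      refine ⟨mem_univ _, ⟨?_, i, hwi, hxi⟩, ⟨?_, j, huj, hxj⟩⟩
      · intro h; exact hxw (congrArg Subtype.val h).symm
      · intro h; exact hxu (congrArg Subtype.val h).symm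
    · obtain ⟨k, hk⟩ := ht
      rw [Finset.mem_inter] at hk
      simp only [supp, mem_filter, mem_univ, true_and] at hk
      rintro (rfl | rfl | ⟨y, hy, rfl⟩)
      · exact ⟨⟨k, hk.1, hk.1⟩, ⟨k, hk.2, hk.1⟩⟩
      · exact ⟨⟨k, hk.1, hk.2⟩, ⟨k, hk.2, hk.2⟩⟩
      · rw [hS, mem_filter] at hy
        obtain ⟨-, ⟨-, i, hwi, hyi⟩, ⟨-, j, huj, hyj⟩⟩ := hy
        exact ⟨⟨i, hwi, hyi⟩, ⟨j, huj, hyj⟩⟩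
  rw [key]
  have hunotim : ∀ y : Vtx n, y.1 ∉ S.image Subtype.val → True := fun _ _ => trivial
  have hwS : w.1 ∉ S.image Subtype.val := by
    simp only [Finset.mem_image, not_exists, not_and]
    intro y hy
    rw [hS, mem_filter] at hy
    intro h
    exact hy.2.1.1 (Subtype.ext h.symm)
  have huS : u.1 ∉ S.image Subtype.val := by
    simp only [Finset.mem_image, not_exists, not_and]
    intro y hy
    rw [hS, mem_filter] at hy
    intro h
    exact hy.2.2.1 (Subtype.ext h.symm)
  have hwne : w.1 ∉ insert u.1 (S.image Subtype.val) := by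
    simp only [Finset.mem_insert, not_or]
    exact ⟨fun h => hwu (Subtype.ext h), hwS⟩
  rw [Finset.card_insert_of_notMem hwne, Finset.card_insert_of_notMem huS,
    Finset.card_image_of_injective _ Subtype.val_injective]

/-- If `|S_w ∩ S_u| ≠ |S_w ∩ S_v|`, then no automorphism fixing `w` maps `u` to `v`. -/
theorem fixing_neighborhood (n : ℕ) (hn : 3 ≤ n) (u v : Vtx n) (huv : u ≠ v)
    (hcard : (supp u.1).card = (supp v.1).card) (w : Vtx n)
    (hw : (supp w.1 ∩ supp u.1).card ≠ (supp w.1 ∩ supp v.1).card)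
    (g : NZC n ≃g NZC n) (hg : g w = w) : g u ≠ v := by
  classical
  intro hgu
  by_cases hwu : w = u
  · subst hwu
    rw [hg] at hgu
    exact huv hgu
  by_cases hwv : w = v
  · have h' : g u = g w := by rw [hgu, hg, hwv]
    exact hwu (g.toEquiv.injective h').symm
  -- adjacency transfer
  have hadj : (NZC n).Adj w u ↔ (NZC n).Adj w v := by
    conv_rhs => rw [← hg, ← hgu]
    exact (g.map_adj_iff).symm
  have hne : (supp w.1 ∩ supp u.1).Nonempty ↔ (supp w.1 ∩ supp v.1).Nonempty := by
    have h1 : ∀ y : Vtx n, w ≠ y → ((NZC n).Adj w y ↔ (supp w.1 ∩ supp y.1).Nonempty) := by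
      intro y hy
      constructor
      · rintro ⟨-, i, h1, h2⟩
        exact ⟨i, by simp [supp, Finset.mem_inter, h1, h2]⟩
      · rintro ⟨i, hi⟩
        rw [Finset.mem_inter] at hi
        simp only [supp, mem_filter, mem_univ, true_and] at hi
        exact ⟨hy, i, hi.1, hi.2⟩
    rw [← h1 u hwu, ← h1 v hwv]
    exact hadj
  by_cases ht : (supp w.1 ∩ supp u.1).Nonempty
  case neg =>
    have hs : ¬ (supp w.1 ∩ supp v.1).Nonempty := fun h => ht (hne.mpr h)
    rw [Finset.not_nonempty_iff_eq_empty] at ht hs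
    rw [ht, hs] at hw
    exact hw rfl
  have hs : (supp w.1 ∩ supp v.1).Nonempty := hne.mp ht
  -- common neighbor counts agree under g
  have hScard : (univ.filter fun x : Vtx n => (NZC n).Adj w x ∧ (NZC n).Adj u x).card
      = (univ.filter fun x : Vtx n => (NZC n).Adj w x ∧ (NZC n).Adj v x).card := by
    apply Finset.card_bij (fun x _ => g x)
    · intro x hx
      rw [mem_filter] at hx ⊢
      refine ⟨mem_univ _, ?_, ?_⟩
      · rw [← hg]; exact g.map_adj_iff.mpr hx.2.1
      · rw [← hgu]; exact g.map_adj_iff.mpr hx.2.2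
    · intro x _ y _ h
      exact g.toEquiv.injective h
    · intro y hy
      refine ⟨g.symm y, ?_, by simp⟩
      rw [mem_filter] at hy ⊢
      refine ⟨mem_univ _, ?_, ?_⟩
      · have := hy.2.1
        rw [← hg] at this
        have h2 := g.symm.map_adj_iff.mpr this
        simpa using h2
      · have := hy.2.2
        rw [← hgu] at this
        have h2 := g.symm.map_adj_iff.mpr this
        simpa using h2
  have hCu := count_eq n w u hwu ht
  have hCv := count_eq n w v hwv hs
  have hCeq : (univ.filter fun x : Fin n → ZMod 2 =>
      (¬ ∀ i ∈ supp w.1, x i = 0) ∧ (¬ ∀ i ∈ supp u.1, x i = 0)).card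
      = (univ.filter fun x : Fin n → ZMod 2 =>
      (¬ ∀ i ∈ supp w.1, x i = 0) ∧ (¬ ∀ i ∈ supp v.1, x i = 0)).card := by
    rw [hCu, hCv, hScard]
  have hIu := incl_excl n (supp w.1) (supp u.1)
  have hIv := incl_excl n (supp w.1) (supp v.1)
  have hule : (supp w.1 ∪ supp u.1).card ≤ n := by
    simpa using Finset.card_le_univ (supp w.1 ∪ supp u.1)
  have hvle : (supp w.1 ∪ supp v.1).card ≤ n := by
    simpa using Finset.card_le_univ (supp w.1 ∪ supp v.1)
  have h1 := Finset.card_inter_add_card_union (supp w.1) (supp u.1)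
  have h2 := Finset.card_inter_add_card_union (supp w.1) (supp v.1)
  -- generalize all the card expressions so that `omega` can work with them
  obtain ⟨Cu, eCu⟩ : ∃ c, (univ.filter fun x : Fin n → ZMod 2 =>
      (¬ ∀ i ∈ supp w.1, x i = 0) ∧ (¬ ∀ i ∈ supp u.1, x i = 0)).card = c := ⟨_, rfl⟩
  obtain ⟨Cv, eCv⟩ : ∃ c, (univ.filter fun x : Fin n → ZMod 2 =>
      (¬ ∀ i ∈ supp w.1, x i = 0) ∧ (¬ ∀ i ∈ supp v.1, x i = 0)).card = c := ⟨_, rfl⟩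
  obtain ⟨cw, ecw⟩ : ∃ c, (supp w.1).card = c := ⟨_, rfl⟩
  obtain ⟨au, eau⟩ : ∃ c, (supp u.1).card = c := ⟨_, rfl⟩
  obtain ⟨av, eav⟩ : ∃ c, (supp v.1).card = c := ⟨_, rfl⟩
  obtain ⟨iu, eiu⟩ : ∃ c, (supp w.1 ∩ supp u.1).card = c := ⟨_, rfl⟩
  obtain ⟨iv, eiv⟩ : ∃ c, (supp w.1 ∩ supp v.1).card = c := ⟨_, rfl⟩
  obtain ⟨uu, euu⟩ : ∃ c, (supp w.1 ∪ supp u.1).card = c := ⟨_, rfl⟩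
  obtain ⟨uv, euv⟩ : ∃ c, (supp w.1 ∪ supp v.1).card = c := ⟨_, rfl⟩
  rw [eCu, eCv] at hCeq
  rw [eCu, ecw, eau, euu] at hIu
  rw [eCv, ecw, eav, euv] at hIv
  rw [eau, eav] at hcard
  rw [eiu, eiv] at hw
  rw [euu] at hule
  rw [euv] at hvle
  rw [eiu, euu, ecw, eau] at h1
  rw [eiv, euv, ecw, eav] at h2
  rw [← hcard] at hIv
  clear hScard hCu hCv eCu eCv ecw eau eav eiu eiv euu euv
  have hpow : 2 ^ (n - uu) = 2 ^ (n - uv) := by omega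
  have hexp : n - uu = n - uv := Nat.pow_right_injective (le_refl 2) hpow
  omega
end

section
/- Let u, v be vertices of G(V) with disjoint supports, each of size i'. For 1 ≤ i ≤ n−1, the number of vertices w with |S_w| = i and |S_w ∩ S_u| ≠ |S_w ∩ S_v| equals C(n,i) − Σ_{j,k: i=2j+k, 1≤j≤i', 0≤k≤n−2i'} C(i',j)²·C(n−2i',k) − C(n−2i',i). -/
open Finset

/-- Indicator vector of a finset. -/
def indic {n : ℕ} (S : Finset (Fin n)) : Fin n → ZMod 2 := fun t => if t ∈ S then 1 else 0

lemma supp_indic {n : ℕ} (S : Finset (Fin n)) : supp (indic S) = S := by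
  ext t
  simp [supp, indic]

lemma indic_supp {n : ℕ} (w : Fin n → ZMod 2) : indic (supp w) = w := by
  have h01 : ∀ x : ZMod 2, x = 0 ∨ x = 1 := by decide
  funext t
  simp only [indic, supp, mem_filter, mem_univ, true_and]
  rcases h01 (w t) with h | h <;> simp [h]

lemma vtx_count {n : ℕ} (i : ℕ) (hi : 1 ≤ i) (p : Finset (Fin n) → Prop) [DecidablePred p] :
    (Finset.univ.filter (fun w : Vtx n => (supp w.1).card = i ∧ p (supp w.1))).card =
      (Finset.univ.filter (fun S : Finset (Fin n) => S.card = i ∧ p S)).card := by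
  have hne : ∀ S ∈ Finset.univ.filter (fun S : Finset (Fin n) => S.card = i ∧ p S),
      (indic S : Fin n → ZMod 2) ≠ 0 := by
    intro S hS
    simp only [mem_filter, mem_univ, true_and] at hS
    have hpos : 0 < S.card := by omega
    obtain ⟨x, hx⟩ := Finset.card_pos.mp hpos
    intro h0
    have : indic S x = 0 := by rw [h0]; rfl
    simp [indic, hx] at this
  refine Finset.card_bij' (fun w _ => supp w.1)
    (fun S hS => (⟨indic S, hne S hS⟩ : Vtx n)) ?_ ?_ ?_ ?_
  · intro w hw
    simp only [mem_filter, mem_univ, true_and] at hw ⊢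
    exact hw
  · intro S hS
    simp only [mem_filter, mem_univ, true_and, supp_indic] at hS ⊢
    exact hS
  · intro w hw
    exact Subtype.ext (indic_supp w.1)
  · intro S hS
    exact supp_indic S

lemma card_decomp {n : ℕ} (A B : Finset (Fin n)) (h : Disjoint A B) (S : Finset (Fin n)) :
    S.card = (S ∩ A).card + (S ∩ B).card + (S \ (A ∪ B)).card := by
  have h1 : (S ∩ A).card + (S \ A).card = S.card := Finset.card_inter_add_card_sdiff S A
  have h2 : ((S \ A) ∩ B).card + ((S \ A) \ B).card = (S \ A).card :=
    Finset.card_inter_add_card_sdiff (S \ A) B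
  have e1 : (S \ A) ∩ B = S ∩ B := by
    ext x
    simp only [mem_inter, mem_sdiff, mem_union]
    constructor
    · tauto
    · rintro ⟨hS, hB⟩
      exact ⟨⟨hS, fun hA => Finset.disjoint_left.mp h hA hB⟩, hB⟩
  have e2 : (S \ A) \ B = S \ (A ∪ B) := by
    ext x
    simp only [mem_sdiff, mem_union]
    tauto
  rw [e1, e2] at h2
  omega

lemma comp_eq {n : ℕ} (A B : Finset (Fin n)) (h : Disjoint A B) (x y z : Finset (Fin n))
    (hx : x ⊆ A) (hy : y ⊆ B) (hz : z ⊆ Finset.univ \ (A ∪ B)) :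
    (x ∪ y ∪ z) ∩ A = x ∧ (x ∪ y ∪ z) ∩ B = y ∧ (x ∪ y ∪ z) \ (A ∪ B) = z := by
  have hz' : ∀ t, t ∈ z → ¬(t ∈ A ∨ t ∈ B) := by
    intro t ht
    have := hz ht
    simp only [mem_sdiff, mem_union] at this
    exact this.2
  have hdis : ∀ t, t ∈ A → t ∈ B → False := fun t ha hb => Finset.disjoint_left.mp h ha hb
  refine ⟨?_, ?_, ?_⟩ <;> ext t <;>
    simp only [mem_inter, mem_union, mem_sdiff] <;>
    constructor
  · rintro ⟨hm, hA⟩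
    rcases hm with (hm | hm) | hm
    · exact hm
    · exact absurd hA (fun hA => hdis t hA (hy hm))
    · exact absurd (Or.inl hA) (hz' t hm)
  · intro ht; exact ⟨Or.inl (Or.inl ht), hx ht⟩
  · rintro ⟨hm, hB⟩
    rcases hm with (hm | hm) | hm
    · exact absurd hB (fun hB => hdis t (hx hm) hB)
    · exact hm
    · exact absurd (Or.inr hB) (hz' t hm)
  · intro ht; exact ⟨Or.inl (Or.inr ht), hy ht⟩
  · rintro ⟨hm, hAB⟩
    rcases hm with (hm | hm) | hm
    · exact absurd (Or.inl (hx hm)) hAB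
    · exact absurd (Or.inr (hy hm)) hAB
    · exact hm
  · intro ht; exact ⟨Or.inr ht, hz' t ht⟩

lemma count3 {n : ℕ} (A B : Finset (Fin n)) (h : Disjoint A B) (a b c : ℕ) :
    (Finset.univ.filter (fun S : Finset (Fin n) =>
        (S ∩ A).card = a ∧ (S ∩ B).card = b ∧ (S \ (A ∪ B)).card = c)).card =
      A.card.choose a * B.card.choose b *
        ((Finset.univ \ (A ∪ B) : Finset (Fin n)).card.choose c) := by
  have key : (Finset.univ.filter (fun S : Finset (Fin n) =>
      (S ∩ A).card = a ∧ (S ∩ B).card = b ∧ (S \ (A ∪ B)).card = c)).card =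
      (A.powersetCard a ×ˢ B.powersetCard b ×ˢ
        (Finset.univ \ (A ∪ B)).powersetCard c).card := by
    apply Finset.card_bij' (fun S _ => (S ∩ A, S ∩ B, S \ (A ∪ B)))
      (fun p _ => p.1 ∪ p.2.1 ∪ p.2.2)
    · intro S hS
      simp only [mem_filter, mem_univ, true_and] at hS
      simp only [mem_product, mem_powersetCard]
      refine ⟨⟨inter_subset_right, hS.1⟩, ⟨inter_subset_right, hS.2.1⟩,
        ⟨Finset.sdiff_subset_sdiff (subset_univ S) Subset.rfl, hS.2.2⟩⟩
    · rintro ⟨x, y, z⟩ hp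
      simp only [mem_product, mem_powersetCard] at hp
      obtain ⟨ce1, ce2, ce3⟩ := comp_eq A B h x y z hp.1.1 hp.2.1.1 hp.2.2.1
      simp only [mem_filter, mem_univ, true_and]
      rw [ce1, ce2, ce3]
      exact ⟨hp.1.2, hp.2.1.2, hp.2.2.2⟩
    · intro S hS
      ext t
      simp only [mem_union, mem_inter, mem_sdiff]
      tauto
    · rintro ⟨x, y, z⟩ hp
      simp only [mem_product, mem_powersetCard] at hp
      obtain ⟨ce1, ce2, ce3⟩ := comp_eq A B h x y z hp.1.1 hp.2.1.1 hp.2.2.1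
      simp only [ce1, ce2, ce3]
  rw [key]
  simp [Finset.card_product, Finset.card_powersetCard, mul_assoc]

lemma countj {n : ℕ} (A B : Finset (Fin n)) (h : Disjoint A B) (i j : ℕ) :
    (Finset.univ.filter (fun S : Finset (Fin n) =>
        S.card = i ∧ (S ∩ A).card = j ∧ (S ∩ B).card = j)).card =
      if 2 * j ≤ i then
        A.card.choose j * B.card.choose j *
          ((Finset.univ \ (A ∪ B) : Finset (Fin n)).card.choose (i - 2 * j))
      else 0 := by
  split_ifs with hji
  · rw [← count3 A B h j j (i - 2 * j)]
    congr 1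
    apply Finset.filter_congr
    intro S _
    have hdec := card_decomp A B h S
    constructor
    · rintro ⟨h1, h2, h3⟩
      exact ⟨h2, h3, by omega⟩
    · rintro ⟨h1, h2, h3⟩
      exact ⟨by omega, h1, h2⟩
  · rw [Finset.card_eq_zero, Finset.filter_eq_empty_iff]
    intro S _
    have hdec := card_decomp A B h S
    rintro ⟨h1, h2, h3⟩
    omega

lemma innerSumAux (n i' i j : ℕ) :
    (∑ k ∈ Finset.range (n - 2 * i' + 1),
      if i = 2 * j + k then (i'.choose j) ^ 2 * ((n - 2 * i').choose k) else 0) =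
      if 2 * j ≤ i then (i'.choose j) ^ 2 * ((n - 2 * i').choose (i - 2 * j)) else 0 := by
  split_ifs with hji
  · by_cases hk : i - 2 * j < n - 2 * i' + 1
    · rw [Finset.sum_eq_single_of_mem (i - 2 * j) (Finset.mem_range.mpr hk)]
      · rw [if_pos (by omega)]
      · intro k _ hkne
        rw [if_neg (by omega)]
    · have h0 : (n - 2 * i').choose (i - 2 * j) = 0 := Nat.choose_eq_zero_of_lt (by omega)
      rw [h0, mul_zero]
      apply Finset.sum_eq_zero
      intro k hk'
      simp only [mem_range] at hk'
      rw [if_neg (by omega)]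
  · apply Finset.sum_eq_zero
    intro k _
    rw [if_neg (by omega)]

/-- Counting the vertices of `T_i` in the fixing neighborhood of a pair of vertices
with disjoint supports each of size `i'`. -/
theorem fix_count (n i' i : ℕ) (hn : 3 ≤ n) (u v : Vtx n)
    (hd : Disjoint (supp u.1) (supp v.1))
    (hu : (supp u.1).card = i') (hv : (supp v.1).card = i')
    (hi1 : 1 ≤ i) (hi2 : i ≤ n - 1) :
    (Finset.univ.filter (fun w : Vtx n => (supp w.1).card = i ∧
        (supp w.1 ∩ supp u.1).card ≠ (supp w.1 ∩ supp v.1).card)).card =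
      n.choose i -
        (∑ j ∈ Finset.Icc 1 i', ∑ k ∈ Finset.range (n - 2 * i' + 1),
          if i = 2 * j + k then (i'.choose j) ^ 2 * ((n - 2 * i').choose k) else 0) -
        (n - 2 * i').choose i := by
  classical
  set A := supp u.1
  set B := supp v.1
  -- cardinality facts
  have hAB : (A ∪ B).card = 2 * i' := by
    rw [Finset.card_union_of_disjoint hd, hu, hv]; omega
  have hcompl : (Finset.univ \ (A ∪ B) : Finset (Fin n)).card = n - 2 * i' := by
    rw [Finset.card_sdiff_of_subset (subset_univ _), Finset.card_univ, Fintype.card_fin, hAB]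
  have h2i' : 2 * i' ≤ n := by
    have := Finset.card_le_univ (A ∪ B)
    rw [hAB] at this
    simpa using this
  -- step 1 : vertices to sets
  rw [vtx_count i hi1 (fun S => (S ∩ A).card ≠ (S ∩ B).card)]
  -- total count
  have htot : (Finset.univ.filter (fun S : Finset (Fin n) => S.card = i)).card = n.choose i := by
    rw [← Finset.powerset_univ, ← Finset.powersetCard_eq_filter,
      Finset.card_powersetCard, Finset.card_univ, Fintype.card_fin]
  -- split equal / not equal
  have hsplit : (Finset.univ.filter (fun S : Finset (Fin n) =>
        S.card = i ∧ (S ∩ A).card = (S ∩ B).card)).card +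
      (Finset.univ.filter (fun S : Finset (Fin n) =>
        S.card = i ∧ (S ∩ A).card ≠ (S ∩ B).card)).card = n.choose i := by
    rw [← htot]
    have := Finset.card_filter_add_card_filter_not
      (s := Finset.univ.filter (fun S : Finset (Fin n) => S.card = i))
      (p := fun S => (S ∩ A).card = (S ∩ B).card)
    rw [Finset.filter_filter, Finset.filter_filter] at this
    exact this
  -- fiberwise decomposition of the "equal" count
  have heq : (Finset.univ.filter (fun S : Finset (Fin n) =>
        S.card = i ∧ (S ∩ A).card = (S ∩ B).card)).card =
      ∑ j ∈ Finset.range (i' + 1),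
        (Finset.univ.filter (fun S : Finset (Fin n) =>
          S.card = i ∧ (S ∩ A).card = j ∧ (S ∩ B).card = j)).card := by
    rw [Finset.card_eq_sum_card_fiberwise (f := fun S : Finset (Fin n) => (S ∩ A).card)
      (t := Finset.range (i' + 1))]
    · apply Finset.sum_congr rfl
      intro j _
      congr 1
      rw [Finset.filter_filter]
      apply Finset.filter_congr
      intro S _
      constructor
      · rintro ⟨⟨h1, h2⟩, h3⟩; exact ⟨h1, h3, by omega⟩
      · rintro ⟨h1, h2, h3⟩; exact ⟨⟨h1, by omega⟩, h2⟩
    · intro S hS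
      simp only [Finset.mem_coe, mem_range]
      have : (S ∩ A).card ≤ A.card := Finset.card_le_card inter_subset_right
      omega
  -- split off j = 0
  have hrange : Finset.range (i' + 1) = insert 0 (Finset.Icc 1 i') := by
    ext x
    simp only [mem_range, mem_insert, mem_Icc]
    omega
  have h0notin : (0 : ℕ) ∉ Finset.Icc 1 i' := by simp
  rw [hrange, Finset.sum_insert h0notin] at heq
  -- j = 0 term
  have hterm0 : (Finset.univ.filter (fun S : Finset (Fin n) =>
      S.card = i ∧ (S ∩ A).card = 0 ∧ (S ∩ B).card = 0)).card = (n - 2 * i').choose i := by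
    rw [countj A B hd i 0, if_pos (by omega)]
    simp [hcompl]
  -- j ≥ 1 terms
  have hterms : ∀ j ∈ Finset.Icc 1 i',
      (Finset.univ.filter (fun S : Finset (Fin n) =>
        S.card = i ∧ (S ∩ A).card = j ∧ (S ∩ B).card = j)).card =
      ∑ k ∈ Finset.range (n - 2 * i' + 1),
        if i = 2 * j + k then (i'.choose j) ^ 2 * ((n - 2 * i').choose k) else 0 := by
    intro j _
    rw [countj A B hd i j, innerSumAux n i' i j, hu, hv, hcompl, sq]
  rw [Finset.sum_congr rfl hterms] at heq
  rw [hterm0] at heq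
  omega
end
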